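/- Let p > 1, γ > 0 and ω > 4/γ². Set y₀ = (2/((p−1)√ω))·arctanh(2/(γ√ω)) and define φ : ℝ∖{0} → ℝ by φ(x) = sign(x)·(((p+1)ω/2)·sech²(((p−1)√ω/2)·(|x|+y₀)))^{1/(p−1)}. Then φ is twice continuously differentiable on ℝ∖{0} and satisfies −φ''(x) + ω·φ(x) − |φ(x)|^{p−1}·φ(x) = 0 for all x ≠ 0; the one-sided limits φ(0±) and φ'(0±) exist and satisfy φ'(0−) = φ'(0+) and φ(0+) − φ(0−) = −γ·φ'(0+). -/

import Mathlib

open MeasureTheory Real Set Filter Topology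

noncomputable def arctanh (x : ℝ) : ℝ := Real.log ((1 + x) / (1 - x)) / 2

noncomputable def psiAux (p ω y : ℝ) : ℝ :=
  ((p + 1) * ω / 2 * (1 / Real.cosh ((p - 1) * Real.sqrt ω / 2 * y)) ^ 2) ^ (1 / (p - 1))

noncomputable def psiAux1 (p ω y : ℝ) : ℝ :=
  -Real.sqrt ω * (Real.sinh ((p - 1) * Real.sqrt ω / 2 * y) /
    Real.cosh ((p - 1) * Real.sqrt ω / 2 * y)) * psiAux p ω y

lemma psiAux_base_pos {p ω : ℝ} (hp : 1 < p) (hω : 0 < ω) (y : ℝ) :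
    0 < (p + 1) * ω / 2 * (1 / Real.cosh ((p - 1) * Real.sqrt ω / 2 * y)) ^ 2 := by
  have h1 : 0 < (p + 1) * ω / 2 := by positivity
  have h2 : 0 < Real.cosh ((p - 1) * Real.sqrt ω / 2 * y) := Real.cosh_pos _
  positivity

lemma psiAux_pos {p ω : ℝ} (hp : 1 < p) (hω : 0 < ω) (y : ℝ) : 0 < psiAux p ω y :=
  Real.rpow_pos_of_pos (psiAux_base_pos hp hω y) _

lemma psiAux_rpow {p ω : ℝ} (hp : 1 < p) (hω : 0 < ω) (y : ℝ) :
    psiAux p ω y ^ (p - 1) =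
      (p + 1) * ω / 2 * (1 / Real.cosh ((p - 1) * Real.sqrt ω / 2 * y)) ^ 2 := by
  have hb := psiAux_base_pos hp hω y
  have hp1 : p - 1 ≠ 0 := by intro h; nlinarith
  rw [psiAux, ← Real.rpow_mul hb.le, one_div_mul_cancel hp1, Real.rpow_one]

lemma hasDerivAt_psiAux {p ω : ℝ} (hp : 1 < p) (hω : 0 < ω) (y : ℝ) :
    HasDerivAt (psiAux p ω) (psiAux1 p ω y) y := by
  have hs : 0 < Real.sqrt ω := Real.sqrt_pos.mpr hω
  set s := Real.sqrt ω with hsdef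
  have hp1 : (0:ℝ) < p - 1 := by linarith
  set b := (p - 1) * s / 2 with hbdef
  have hC : 0 < Real.cosh (b * y) := Real.cosh_pos _
  have hid : HasDerivAt (fun y : ℝ => b * y) b y := by
    simpa using (hasDerivAt_id y).const_mul b
  have hch : HasDerivAt (fun y => Real.cosh (b * y)) (Real.sinh (b * y) * b) y := hid.cosh
  have hinv : HasDerivAt (fun y => (Real.cosh (b * y))⁻¹)
      (-(Real.sinh (b * y) * b) / Real.cosh (b * y) ^ 2) y := hch.inv hC.ne'
  have hpow := hinv.pow 2
  have hg := hpow.const_mul ((p + 1) * ω / 2)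
  have hQ : 0 < (p + 1) * ω / 2 * ((Real.cosh (b * y))⁻¹) ^ 2 := by positivity
  have hψ := hg.rpow_const (p := 1 / (p - 1)) (Or.inl hQ.ne')
  have heq : (fun y => ((p + 1) * ω / 2 * ((Real.cosh (b * y))⁻¹) ^ 2) ^ (1 / (p - 1)))
      = psiAux p ω := by
    funext z; rw [psiAux]; norm_num [hbdef, hsdef]
  simp only [Pi.pow_apply] at hψ
  rw [heq] at hψ
  convert hψ using 1
  have h1 : ((p + 1) * ω / 2 * ((Real.cosh (b * y))⁻¹) ^ 2) ^ (1 / (p - 1) - 1)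
      = ((p + 1) * ω / 2 * ((Real.cosh (b * y))⁻¹) ^ 2) ^ (1 / (p - 1)) /
        ((p + 1) * ω / 2 * ((Real.cosh (b * y))⁻¹) ^ 2) := by
    rw [Real.rpow_sub hQ, Real.rpow_one]
  have hps1 : psiAux1 p ω y = -s * (Real.sinh (b * y) / Real.cosh (b * y)) *
      ((p + 1) * ω / 2 * ((Real.cosh (b * y))⁻¹) ^ 2) ^ (1 / (p - 1)) := by
    rw [psiAux1, psiAux]; norm_num [hbdef, hsdef]
  rw [hps1, h1, hbdef]
  have hC' := hC.ne'
  have hA : ((p + 1) * ω / 2) ≠ 0 := by positivity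
  have hC'' : Real.cosh ((p - 1) * s / 2 * y) ≠ 0 := (Real.cosh_pos _).ne'
  field_simp
  ring_nf
  rw [mul_inv_cancel_right₀ (Real.cosh_pos _).ne']


lemma hasDerivAt_psiAux1 {p ω : ℝ} (hp : 1 < p) (hω : 0 < ω) (y : ℝ) :
    HasDerivAt (psiAux1 p ω)
      (ω * psiAux p ω y -
        (p + 1) * ω / 2 * (1 / Real.cosh ((p - 1) * Real.sqrt ω / 2 * y)) ^ 2 * psiAux p ω y)
      y := by
  have hs : 0 < Real.sqrt ω := Real.sqrt_pos.mpr hω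
  set s := Real.sqrt ω with hsdef
  have hs2 : s ^ 2 = ω := Real.sq_sqrt hω.le
  set b := (p - 1) * s / 2 with hbdef
  have hC : 0 < Real.cosh (b * y) := Real.cosh_pos _
  have hid : HasDerivAt (fun y : ℝ => b * y) b y := by
    simpa using (hasDerivAt_id y).const_mul b
  have hch : HasDerivAt (fun y => Real.cosh (b * y)) (Real.sinh (b * y) * b) y := hid.cosh
  have hsh : HasDerivAt (fun y => Real.sinh (b * y)) (Real.cosh (b * y) * b) y := hid.sinh
  have hq := hsh.div hch hC.ne'
  have hm := hq.const_mul (-s)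
  have hprod := hm.mul (hasDerivAt_psiAux hp hω y)
  have heq : (fun y => -s * (Real.sinh (b * y) / Real.cosh (b * y)) * psiAux p ω y)
      = psiAux1 p ω := by
    funext z; rw [psiAux1]
  simp only [Pi.div_apply, Pi.mul_def] at hprod
  rw [heq] at hprod
  refine hprod.congr_deriv (Eq.symm ?_)
  have hps1 : psiAux1 p ω y = -s * (Real.sinh (b * y) / Real.cosh (b * y)) * psiAux p ω y := by
    rw [psiAux1]
  have hS2 : Real.sinh (b * y) ^ 2 = Real.cosh (b * y) ^ 2 - 1 := Real.sinh_sq _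
  have harg : (p - 1) * Real.sqrt ω / 2 * y = b * y := by rw [hbdef]
  rw [hps1, harg]
  set P := psiAux p ω y
  have hC' := hC.ne'
  field_simp
  linear_combination (2*s*P*Real.cosh (b*y)^6 - 2*s*P*Real.cosh (b*y)^4*Real.sinh (b*y)^2) * hbdef
    + (-(p+1)*s^2*P*Real.cosh (b*y)^4) * hS2
    + ((p+1)*P*Real.cosh (b*y)^4 - 2*P*Real.cosh (b*y)^6) * hs2
    + (ω*P*(p+1)*(Real.cosh (b*y)^4 - 1)) * hS2
    + (P*(Real.cosh (b*y)^2*p - Real.cosh (b*y)^2 + Real.cosh (b*y)^4*Real.sinh (b*y)^2*(p+1) - Real.cosh (b*y)^6*p + Real.cosh (b*y)^6 - Real.sinh (b*y)^2*(p+1))) * hs2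


lemma contDiffAt_psiAux {p ω : ℝ} (hp : 1 < p) (hω : 0 < ω) (y : ℝ) :
    ContDiffAt ℝ 2 (psiAux p ω) y := by
  have hC : Real.cosh ((p - 1) * Real.sqrt ω / 2 * y) ≠ 0 := (Real.cosh_pos _).ne'
  have h1 : ContDiff ℝ 2 (fun y : ℝ => Real.cosh ((p - 1) * Real.sqrt ω / 2 * y)) :=
    (contDiff_const.mul contDiff_id).cosh
  have h2 : ContDiffAt ℝ 2
      (fun y : ℝ => (p + 1) * ω / 2 * (1 / Real.cosh ((p - 1) * Real.sqrt ω / 2 * y)) ^ 2) y := by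
    simp only [one_div]
    exact contDiffAt_const.mul ((h1.contDiffAt.inv hC).pow 2)
  have hQ : (p + 1) * ω / 2 * (1 / Real.cosh ((p - 1) * Real.sqrt ω / 2 * y)) ^ 2 ≠ 0 :=
    (psiAux_base_pos hp hω y).ne'
  exact h2.rpow_const_of_ne hQ

lemma sinh_div_cosh_arctanh {t : ℝ} (h2 : -1 < t) (h1 : t < 1) :
    Real.sinh (arctanh t) / Real.cosh (arctanh t) = t := by
  have ht1 : (0:ℝ) < 1 - t := by linarith
  have ht2 : (0:ℝ) < 1 + t := by linarith
  have hs : 0 < (1 + t) / (1 - t) := div_pos ht2 ht1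
  set u := arctanh t with hu
  have hE : Real.exp u * Real.exp u = (1 + t) / (1 - t) := by
    rw [← Real.exp_add]
    have : u + u = Real.log ((1 + t) / (1 - t)) := by rw [hu, arctanh]; ring
    rw [this, Real.exp_log hs]
  have hE' : (1 - t) * (Real.exp u * Real.exp u) = 1 + t := by
    rw [hE]; field_simp
  have hene : Real.exp u ≠ 0 := (Real.exp_pos u).ne'
  have hcosh : Real.cosh u ≠ 0 := (Real.cosh_pos _).ne'
  rw [Real.sinh_eq, Real.cosh_eq, Real.exp_neg]
  rw [div_eq_iff (by positivity : (Real.exp u + (Real.exp u)⁻¹) / 2 ≠ 0)]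
  field_simp
  linear_combination hE'


/-- The odd profile `φ_{ω,γ}^{odd}` is `C²` away from the origin, solves the stationary
NLS equation `−φ'' + ωφ − |φ|^{p−1}φ = 0` for `x ≠ 0`, and its one-sided boundary values
satisfy the δ'-vertex conditions `φ'(0−) = φ'(0+)` and `φ(0+) − φ(0−) = −γ·φ'(0+)`. -/
theorem odd_profile_solves_NLS_delta_prime (p γ ω : ℝ) (hp : 1 < p) (hγ : 0 < γ)
    (hω : 4 / γ ^ 2 < ω)
    (y₀ : ℝ) (hy₀ : y₀ = 2 / ((p - 1) * Real.sqrt ω) * arctanh (2 / (γ * Real.sqrt ω)))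
    (φ : ℝ → ℝ)
    (hφ : ∀ x : ℝ, x ≠ 0 → φ x = Real.sign x * ((p + 1) * ω / 2 *
      (1 / Real.cosh ((p - 1) * Real.sqrt ω / 2 * (|x| + y₀))) ^ 2) ^ (1 / (p - 1))) :
    ContDiffOn ℝ 2 φ {(0 : ℝ)}ᶜ ∧
    (∀ x : ℝ, x ≠ 0 → -(deriv (deriv φ) x) + ω * φ x - |φ x| ^ (p - 1) * φ x = 0) ∧
    ∃ Lp Lm Dp Dm : ℝ,
      Filter.Tendsto φ (nhdsWithin 0 (Set.Ioi 0)) (nhds Lp) ∧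
      Filter.Tendsto φ (nhdsWithin 0 (Set.Iio 0)) (nhds Lm) ∧
      Filter.Tendsto (deriv φ) (nhdsWithin 0 (Set.Ioi 0)) (nhds Dp) ∧
      Filter.Tendsto (deriv φ) (nhdsWithin 0 (Set.Iio 0)) (nhds Dm) ∧
      Dm = Dp ∧ Lp - Lm = -γ * Dp := by
  have hω0 : 0 < ω := lt_trans (by positivity) hω
  have hs : 0 < Real.sqrt ω := Real.sqrt_pos.mpr hω0
  have hp1 : (0:ℝ) < p - 1 := by linarith
  -- φ agrees with smooth profiles on each side
  have hpos : ∀ x ∈ Ioi (0:ℝ), φ x = psiAux p ω (x + y₀) := by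
    intro x hx
    rw [hφ x (ne_of_gt hx), Real.sign_of_pos hx, abs_of_pos hx, one_mul, psiAux]
  have hneg : ∀ x ∈ Iio (0:ℝ), φ x = -psiAux p ω (-x + y₀) := by
    intro x hx
    rw [hφ x (ne_of_lt hx), Real.sign_of_neg hx, abs_of_neg hx, psiAux]; ring
  -- derivatives of the side profiles
  have hFp : ∀ x : ℝ, HasDerivAt (fun x => psiAux p ω (x + y₀)) (psiAux1 p ω (x + y₀)) x := by
    intro x
    have h := (hasDerivAt_psiAux hp hω0 (x + y₀)).comp x ((hasDerivAt_id x).add_const y₀)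
    simpa [Function.comp_def] using h
  have hFm : ∀ x : ℝ, HasDerivAt (fun x => -psiAux p ω (-x + y₀)) (psiAux1 p ω (-x + y₀)) x := by
    intro x
    have hin : HasDerivAt (fun x : ℝ => -x + y₀) (-1) x := by
      simpa using ((hasDerivAt_id x).neg.add_const y₀)
    have h := ((hasDerivAt_psiAux hp hω0 (-x + y₀)).comp x hin).neg
    simpa [Function.comp_def, Pi.neg_def] using h
  have hFp1 : ∀ x : ℝ, HasDerivAt (fun x => psiAux1 p ω (x + y₀))
      (ω * psiAux p ω (x + y₀) - (p + 1) * ω / 2 *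
        (1 / Real.cosh ((p - 1) * Real.sqrt ω / 2 * (x + y₀))) ^ 2 * psiAux p ω (x + y₀)) x := by
    intro x
    have h := (hasDerivAt_psiAux1 hp hω0 (x + y₀)).comp x ((hasDerivAt_id x).add_const y₀)
    simpa [Function.comp_def] using h
  have hFm1 : ∀ x : ℝ, HasDerivAt (fun x => psiAux1 p ω (-x + y₀))
      (-(ω * psiAux p ω (-x + y₀) - (p + 1) * ω / 2 *
        (1 / Real.cosh ((p - 1) * Real.sqrt ω / 2 * (-x + y₀))) ^ 2 * psiAux p ω (-x + y₀))) x := by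
    intro x
    have hin : HasDerivAt (fun x : ℝ => -x + y₀) (-1) x := by
      simpa using ((hasDerivAt_id x).neg.add_const y₀)
    have h := (hasDerivAt_psiAux1 hp hω0 (-x + y₀)).comp x hin
    simpa [Function.comp_def] using h
  -- first derivative of φ on each side
  have hderiv_pos : ∀ x ∈ Ioi (0:ℝ), deriv φ x = psiAux1 p ω (x + y₀) := by
    intro x hx
    have hev : φ =ᶠ[nhds x] fun x => psiAux p ω (x + y₀) :=
      Filter.eventually_of_mem (Ioi_mem_nhds hx) hpos
    rw [hev.deriv_eq, (hFp x).deriv]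
  have hderiv_neg : ∀ x ∈ Iio (0:ℝ), deriv φ x = psiAux1 p ω (-x + y₀) := by
    intro x hx
    have hev : φ =ᶠ[nhds x] fun x => -psiAux p ω (-x + y₀) :=
      Filter.eventually_of_mem (Iio_mem_nhds hx) hneg
    rw [hev.deriv_eq, (hFm x).deriv]
  -- second derivative of φ on each side
  have hderiv2_pos : ∀ x ∈ Ioi (0:ℝ), deriv (deriv φ) x =
      ω * psiAux p ω (x + y₀) - (p + 1) * ω / 2 *
        (1 / Real.cosh ((p - 1) * Real.sqrt ω / 2 * (x + y₀))) ^ 2 * psiAux p ω (x + y₀) := by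
    intro x hx
    have hev : deriv φ =ᶠ[nhds x] fun x => psiAux1 p ω (x + y₀) :=
      Filter.eventually_of_mem (Ioi_mem_nhds hx) hderiv_pos
    rw [hev.deriv_eq, (hFp1 x).deriv]
  have hderiv2_neg : ∀ x ∈ Iio (0:ℝ), deriv (deriv φ) x =
      -(ω * psiAux p ω (-x + y₀) - (p + 1) * ω / 2 *
        (1 / Real.cosh ((p - 1) * Real.sqrt ω / 2 * (-x + y₀))) ^ 2 * psiAux p ω (-x + y₀)) := by
    intro x hx
    have hev : deriv φ =ᶠ[nhds x] fun x => psiAux1 p ω (-x + y₀) :=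
      Filter.eventually_of_mem (Iio_mem_nhds hx) hderiv_neg
    rw [hev.deriv_eq, (hFm1 x).deriv]
  refine ⟨?_, ?_, ?_⟩
  · -- C² away from 0
    intro x hx
    rcases lt_or_gt_of_ne (show x ≠ 0 from hx) with hlt | hgt
    · have hC : ContDiffAt ℝ 2 (fun x => -psiAux p ω (-x + y₀)) x :=
        ((contDiffAt_psiAux hp hω0 (-x + y₀)).comp x
          ((contDiff_id.neg.add contDiff_const).contDiffAt)).neg
      have hev : φ =ᶠ[nhds x] fun x => -psiAux p ω (-x + y₀) :=
        Filter.eventually_of_mem (Iio_mem_nhds hlt) hneg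
      exact (hC.congr_of_eventuallyEq hev).contDiffWithinAt
    · have hC : ContDiffAt ℝ 2 (fun x => psiAux p ω (x + y₀)) x :=
        (contDiffAt_psiAux hp hω0 (x + y₀)).comp x
          ((contDiff_id.add contDiff_const).contDiffAt)
      have hev : φ =ᶠ[nhds x] fun x => psiAux p ω (x + y₀) :=
        Filter.eventually_of_mem (Ioi_mem_nhds hgt) hpos
      exact (hC.congr_of_eventuallyEq hev).contDiffWithinAt
  · -- the ODE
    intro x hx
    rcases lt_or_gt_of_ne hx with hlt | hgt
    · rw [hderiv2_neg x hlt, hneg x hlt, abs_neg, abs_of_pos (psiAux_pos hp hω0 _),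
        psiAux_rpow hp hω0]
      ring
    · rw [hderiv2_pos x hgt, hpos x hgt, abs_of_pos (psiAux_pos hp hω0 _),
        psiAux_rpow hp hω0]
      ring
  · -- boundary limits and vertex conditions
    refine ⟨psiAux p ω y₀, -psiAux p ω y₀, psiAux1 p ω y₀, psiAux1 p ω y₀, ?_, ?_, ?_, ?_, rfl, ?_⟩
    · have hc : Filter.Tendsto (fun x => psiAux p ω (x + y₀)) (nhdsWithin (0:ℝ) (Set.Ioi (0:ℝ)))
          (nhds (psiAux p ω y₀)) := by
        have := ((hFp 0).differentiableAt.continuousAt).tendsto.mono_left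
          (nhdsWithin_le_nhds : nhdsWithin (0:ℝ) (Set.Ioi 0) ≤ nhds 0)
        simpa using this
      exact hc.congr' (Filter.eventuallyEq_of_mem self_mem_nhdsWithin
        fun x hx => (hpos x hx).symm)
    · have hc : Filter.Tendsto (fun x => -psiAux p ω (-x + y₀)) (nhdsWithin (0:ℝ) (Set.Iio (0:ℝ)))
          (nhds (-psiAux p ω y₀)) := by
        have := ((hFm 0).differentiableAt.continuousAt).tendsto.mono_left
          (nhdsWithin_le_nhds : nhdsWithin (0:ℝ) (Set.Iio 0) ≤ nhds 0)
        simpa using this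
      exact hc.congr' (Filter.eventuallyEq_of_mem self_mem_nhdsWithin
        fun x hx => (hneg x hx).symm)
    · have hc : Filter.Tendsto (fun x => psiAux1 p ω (x + y₀)) (nhdsWithin (0:ℝ) (Set.Ioi (0:ℝ)))
          (nhds (psiAux1 p ω y₀)) := by
        have := ((hFp1 0).differentiableAt.continuousAt).tendsto.mono_left
          (nhdsWithin_le_nhds : nhdsWithin (0:ℝ) (Set.Ioi 0) ≤ nhds 0)
        simpa using this
      exact hc.congr' (Filter.eventuallyEq_of_mem self_mem_nhdsWithin
        fun x hx => (hderiv_pos x hx).symm)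
    · have hc : Filter.Tendsto (fun x => psiAux1 p ω (-x + y₀)) (nhdsWithin (0:ℝ) (Set.Iio (0:ℝ)))
          (nhds (psiAux1 p ω y₀)) := by
        have := ((hFm1 0).differentiableAt.continuousAt).tendsto.mono_left
          (nhdsWithin_le_nhds : nhdsWithin (0:ℝ) (Set.Iio 0) ≤ nhds 0)
        simpa using this
      exact hc.congr' (Filter.eventuallyEq_of_mem self_mem_nhdsWithin
        fun x hx => (hderiv_neg x hx).symm)
    · -- jump condition
      have hγs : 2 < γ * Real.sqrt ω := by
        have h4 : 4 < ω * γ ^ 2 := by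
          rw [div_lt_iff₀ (by positivity)] at hω; linarith
        have hsq : (γ * Real.sqrt ω) ^ 2 = γ ^ 2 * ω := by
          rw [mul_pow, Real.sq_sqrt hω0.le]
        nlinarith [mul_pos hγ hs]
      have ht0 : (0:ℝ) < 2 / (γ * Real.sqrt ω) := by positivity
      have ht1 : 2 / (γ * Real.sqrt ω) < 1 := by
        rw [div_lt_one (by positivity)]; exact hγs
      have harg : (p - 1) * Real.sqrt ω / 2 * y₀ = arctanh (2 / (γ * Real.sqrt ω)) := by
        rw [hy₀]; field_simp
      have htanh : Real.sinh ((p - 1) * Real.sqrt ω / 2 * y₀) /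
          Real.cosh ((p - 1) * Real.sqrt ω / 2 * y₀) = 2 / (γ * Real.sqrt ω) := by
        rw [harg]; exact sinh_div_cosh_arctanh (by linarith) ht1
      rw [psiAux1, htanh]
      have hγs' : γ * Real.sqrt ω ≠ 0 := by positivity
      field_simp
      ring
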